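/- For positive integers n and d, let r(d, n) be the largest divisor of d coprime to n and s(d, n) = d / r(d, n). Then Φ_n(z^d) = ∏_{r | r(d,n)} Φ_{r · n · s(d,n)}(z), where Φ_k denotes the k-th cyclotomic polynomial. -/

import Mathlib

noncomputable section
open Polynomial

/-- r(d, n): the largest divisor of d coprime to n. -/
def rpart (d n : ℕ) : ℕ := sSup {r : ℕ | r ∣ d ∧ Nat.Coprime r n}

/-- s(d, n) = d / r(d, n): the part of d built from primes dividing n. -/
def spart (d n : ℕ) : ℕ := d / rpart d n

lemma prod_divisors_mul_coprime {M : Type*} [CommMonoid M] (f : ℕ → M) {a b : ℕ}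
    (hab : a.Coprime b) (ha : a ≠ 0) (hb : b ≠ 0) :
    ∏ e ∈ (a * b).divisors, f e = ∏ x ∈ a.divisors, ∏ y ∈ b.divisors, f (x * y) := by
  rw [← Finset.prod_product']
  refine (Finset.prod_nbij (fun p => p.1 * p.2) ?_ ?_ ?_ ?_).symm
  · rintro ⟨x, y⟩ h
    simp only [Finset.mem_product, Nat.mem_divisors] at h
    exact Nat.mem_divisors.2 ⟨mul_dvd_mul h.1.1 h.2.1, mul_ne_zero ha hb⟩
  · rintro ⟨x₁, y₁⟩ h₁ ⟨x₂, y₂⟩ h₂ h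
    simp only [Finset.coe_product, Set.mem_prod, Finset.mem_coe, Nat.mem_divisors] at h₁ h₂
    have h' : x₁ * y₁ = x₂ * y₂ := h
    have hx : x₁ = x₂ := by
      have c1 : x₁.Coprime y₂ := Nat.Coprime.coprime_dvd_right h₂.2.1
        (Nat.Coprime.coprime_dvd_left h₁.1.1 hab)
      have c2 : x₂.Coprime y₁ := Nat.Coprime.coprime_dvd_right h₁.2.1
        (Nat.Coprime.coprime_dvd_left h₂.1.1 hab)
      exact Nat.dvd_antisymm
        (c1.dvd_of_dvd_mul_right (h' ▸ Dvd.intro y₁ rfl))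
        (c2.dvd_of_dvd_mul_right (h'.symm ▸ Dvd.intro y₂ rfl))
    have hx0 : 0 < x₁ := Nat.pos_of_ne_zero fun h0 =>
      ha (Nat.eq_zero_of_zero_dvd (h0 ▸ h₁.1.1))
    have hy : y₁ = y₂ := by
      subst hx
      exact Nat.eq_of_mul_eq_mul_left hx0 h'
    simp only [hx, hy]
  · intro e he
    simp only [Finset.mem_coe, Nat.mem_divisors] at he
    obtain ⟨x, y, hx, hy, rfl⟩ := exists_dvd_and_dvd_of_dvd_mul he.1
    exact ⟨⟨x, y⟩, by
      simp only [Finset.coe_product, Set.mem_prod, Finset.mem_coe, Nat.mem_divisors]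
      exact ⟨⟨hx, ha⟩, hy, hb⟩, rfl⟩
  · intros; rfl

lemma expand_cyclotomic_of_primes_dvd : ∀ s n : ℕ, 0 < s → 0 < n →
    (∀ p : ℕ, p.Prime → p ∣ s → p ∣ n) →
    Polynomial.expand ℚ s (cyclotomic n ℚ) = cyclotomic (n * s) ℚ := by
  intro s
  induction s using Nat.strong_induction_on with
  | _ s ih =>
    intro n hs hn hps
    rcases eq_or_lt_of_le (Nat.one_le_of_lt hs) with h1 | h1
    · simp [← h1]
    · have hpp : (s.minFac).Prime := Nat.minFac_prime (by omega)
      have hpn : s.minFac ∣ n := hps _ hpp (Nat.minFac_dvd s)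
      obtain ⟨t, ht⟩ := Nat.minFac_dvd s
      have ht0 : 0 < t := by
        rcases Nat.eq_zero_or_pos t with rfl | h
        · omega
        · exact h
      have hlt : t < s := by nlinarith [hpp.two_le]
      rw [ht, mul_comm, ← Polynomial.expand_expand,
        cyclotomic_expand_eq_cyclotomic hpp hpn,
        ih t hlt (n * s.minFac) ht0 (Nat.mul_pos hn hpp.pos)
          (fun q hq hqt => Dvd.dvd.mul_right (hps q hq ((hqt.mul_left s.minFac).trans ht.symm.dvd)) _),
        mul_right_comm]
      congr 1
      ring

lemma expand_pow_cyclotomic {p : ℕ} (hpp : p.Prime) (k : ℕ) {n : ℕ} (hn : 0 < n)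
    (hpn : ¬ p ∣ n) :
    Polynomial.expand ℚ (p ^ k) (cyclotomic n ℚ) =
      ∏ e ∈ (p ^ k).divisors, cyclotomic (n * e) ℚ := by
  rw [Nat.prod_divisors_prime_pow hpp]
  induction k with
  | zero => simp
  | succ k ihk =>
    rw [pow_succ, ← Polynomial.expand_expand,
      cyclotomic_expand_eq_cyclotomic_mul hpp hpn, map_mul, ihk,
      expand_cyclotomic_of_primes_dvd (p ^ k) (n * p) (pow_pos hpp.pos k)
        (Nat.mul_pos hn hpp.pos)
        (fun q hq hqk => ((Nat.prime_dvd_prime_iff_eq hq hpp).1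
          (hq.dvd_of_dvd_pow hqk)) ▸ Dvd.dvd.mul_left dvd_rfl n),
      Finset.prod_range_succ (fun x => cyclotomic (n * p ^ x) ℚ) (k+1), mul_comm]
    congr 2
    ring

lemma expand_cyclotomic_of_coprime : ∀ r n : ℕ, 0 < r → 0 < n → Nat.Coprime r n →
    Polynomial.expand ℚ r (cyclotomic n ℚ) = ∏ e ∈ r.divisors, cyclotomic (n * e) ℚ := by
  intro r
  induction r using Nat.strong_induction_on with
  | _ r ih =>
    intro n hr hn hrn
    rcases eq_or_lt_of_le (Nat.one_le_of_lt hr) with h1 | h1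
    · simp [← h1]
    · have hpp : (r.minFac).Prime := Nat.minFac_prime (by omega)
      set p := r.minFac with hpdef
      set k := r.factorization p with hk
      set m := r / p ^ k with hm
      have hk0 : 0 < k := by
        rw [hk]
        exact (Nat.Prime.factorization_pos_of_dvd hpp (by omega) (Nat.minFac_dvd r))
      have hpkd : p ^ k ∣ r := Nat.ordProj_dvd r p
      have hmr : r = p ^ k * m := (Nat.mul_div_cancel' hpkd).symm
      have hpm : ¬ p ∣ m := Nat.not_dvd_ordCompl hpp (by omega)
      have hm0 : 0 < m := Nat.ordCompl_pos p (by omega)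
      have hmlt : m < r := by
        have h2 : 1 < p ^ k := Nat.one_lt_pow (by omega) hpp.two_le
        calc m = 1 * m := (one_mul m).symm
        _ < p ^ k * m := (Nat.mul_lt_mul_right hm0).2 h2
        _ = r := hmr.symm
      have hcop : (p ^ k).Coprime m := Nat.Coprime.pow_left _
        ((Nat.Prime.coprime_iff_not_dvd hpp).2 hpm)
      have hpn : ¬ p ∣ n := by
        intro h
        have hdg : p ∣ Nat.gcd r n := Nat.dvd_gcd (Nat.minFac_dvd r) h
        rw [hrn] at hdg
        exact hpp.one_lt.ne' (Nat.dvd_one.mp hdg)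
      have hmn : m.Coprime n := Nat.Coprime.coprime_dvd_left
        (hmr ▸ dvd_mul_left m (p ^ k)) hrn
      rw [hmr, Polynomial.expand_mul, ih m hmlt n hm0 hn hmn, map_prod,
        prod_divisors_mul_coprime _ hcop (pow_pos hpp.pos k).ne' hm0.ne']
      rw [Finset.prod_comm]
      refine Finset.prod_congr rfl fun y hy => ?_
      have hyp : y ∣ m := (Nat.mem_divisors.1 hy).1
      have hpny : ¬ p ∣ n * y := by
        intro h
        rcases (Nat.Prime.dvd_mul hpp).1 h with h | h
        · exact hpn h
        · exact hpm (h.trans hyp)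
      rw [expand_pow_cyclotomic hpp k (Nat.mul_pos hn (Nat.pos_of_mem_divisors hy)) hpny]
      refine Finset.prod_congr rfl fun x hx => ?_
      congr 1
      ring

lemma rpart_mem (d n : ℕ) (hd : 0 < d) :
    rpart d n ∣ d ∧ (rpart d n).Coprime n := by
  have hne : {r : ℕ | r ∣ d ∧ Nat.Coprime r n}.Nonempty :=
    ⟨1, one_dvd d, Nat.coprime_one_left n⟩
  have hbdd : BddAbove {r : ℕ | r ∣ d ∧ Nat.Coprime r n} :=
    ⟨d, fun r hr => Nat.le_of_dvd hd hr.1⟩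
  exact Nat.sSup_mem hne hbdd

lemma le_rpart (d n : ℕ) (hd : 0 < d) {r : ℕ} (h1 : r ∣ d) (h2 : r.Coprime n) :
    r ≤ rpart d n :=
  le_csSup ⟨d, fun r hr => Nat.le_of_dvd hd hr.1⟩ ⟨h1, h2⟩

/-- Φ_n(z^d) = ∏_{r ∣ r(d,n)} Φ_{r·n·s(d,n)}(z), where Φ_k is the
k-th cyclotomic polynomial. -/
theorem cyclotomic_comp_pow (n d : ℕ) (hn : 0 < n) (hd : 0 < d) :
    (Polynomial.cyclotomic n ℚ).comp (Polynomial.X ^ d) =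
      ∏ r ∈ (rpart d n).divisors, Polynomial.cyclotomic (r * n * spart d n) ℚ := by
  obtain ⟨hR, hRn⟩ := rpart_mem d n hd
  set R := rpart d n with hRdef
  set S := spart d n with hSdef
  have hR0 : 0 < R := Nat.pos_of_dvd_of_pos hR hd
  have hdRS : d = R * S := (Nat.mul_div_cancel' hR).symm
  have hS0 : 0 < S :=
    Nat.pos_of_ne_zero fun h => hd.ne' (by rw [hdRS, h, mul_zero])
  have hSp : ∀ p : ℕ, p.Prime → p ∣ S → p ∣ n := by
    intro p hp hpS
    by_contra hpn
    have hdvd : R * p ∣ d := by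
      rw [hdRS]
      exact mul_dvd_mul_left R hpS
    have hcop : (R * p).Coprime n :=
      Nat.Coprime.mul hRn ((Nat.Prime.coprime_iff_not_dvd hp).2 hpn)
    have := le_rpart d n hd hdvd hcop
    nlinarith [hp.two_le]
  have hRS : R.Coprime S := by
    by_contra hc
    obtain ⟨p, hp, hpR, hpS⟩ := Nat.Prime.not_coprime_iff_dvd.1 hc
    have : p ∣ Nat.gcd R n := Nat.dvd_gcd hpR (hSp p hp hpS)
    rw [hRn] at this
    exact hp.one_lt.ne' (Nat.dvd_one.mp this)
  have hRnS : R.Coprime (n * S) := Nat.Coprime.mul_right hRn hRS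
  rw [← Polynomial.expand_eq_comp_X_pow, hdRS, Polynomial.expand_mul,
    expand_cyclotomic_of_primes_dvd S n hS0 hn hSp,
    expand_cyclotomic_of_coprime R (n * S) hR0 (Nat.mul_pos hn hS0) hRnS]
  refine Finset.prod_congr rfl fun x hx => ?_
  congr 1
  ring
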